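/- Let n ≥ 1, let ε > 0, and let T be an n-star with center a, i.e., a continuum that is the union of n arcs B_1, …, B_n, each having a as one of its endpoints, with B_i ∩ B_j = {a} whenever i ≠ j. Then there exists a mixing continuous map f : T → T such that f(a) = a, f fixes every endpoint of each arc B_i, and sup_{x∈T} d(f(x), x) < ε. -/

import Mathlib

open Set Topology Filter TopologicalSpace

/-- A dendrite: a nondegenerate continuum in which any two distinct points can be
separated by a third point. -/
def IsDendrite (X : Type*) [TopologicalSpace X] : Prop :=
  Nontrivial X ∧ ∀ x y : X, x ≠ y → ∃ z : X, z ≠ x ∧ z ≠ y ∧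
    connectedComponentIn ({z}ᶜ : Set X) x ≠ connectedComponentIn ({z}ᶜ : Set X) y

/-- `p` is an endpoint of `X` if `X \ {p}` is connected. -/
def IsEndpointOf (X : Type*) [TopologicalSpace X] (p : X) : Prop :=
  IsPreconnected ({p}ᶜ : Set X)

/-- A periodic point of `f`. -/
def IsPeriodic {X : Type*} (f : X → X) (x : X) : Prop :=
  ∃ n : ℕ, 1 ≤ n ∧ f^[n] x = x

/-- `x` has dense forward orbit under `f`. -/
def HasDenseOrbit {X : Type*} [TopologicalSpace X] (f : X → X) (x : X) : Prop :=
  Dense {y : X | ∃ n : ℕ, 1 ≤ n ∧ f^[n] x = y}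

/-- Topological transitivity. -/
def TopTransitive {X : Type*} [TopologicalSpace X] (f : X → X) : Prop :=
  ∀ U V : Set X, IsOpen U → IsOpen V → U.Nonempty → V.Nonempty →
    ∃ n : ℕ, 0 < n ∧ (f^[n] '' U ∩ V).Nonempty

/-- Total transitivity: every iterate is transitive. -/
def TotallyTransitive {X : Type*} [TopologicalSpace X] (f : X → X) : Prop :=
  ∀ n : ℕ, 1 ≤ n → TopTransitive (f^[n])

/-- Weak mixing: `f × f` is transitive. -/
def WeaklyMixing {X : Type*} [TopologicalSpace X] (f : X → X) : Prop :=
  TopTransitive (Prod.map f f)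

/-- Topological mixing. -/
def TopMixing {X : Type*} [TopologicalSpace X] (f : X → X) : Prop :=
  ∀ U V : Set X, IsOpen U → IsOpen V → U.Nonempty → V.Nonempty →
    ∃ N : ℕ, ∀ n, N ≤ n → (f^[n] '' U ∩ V).Nonempty

/-- Exactness. -/
def TopExact {X : Type*} [TopologicalSpace X] (f : X → X) : Prop :=
  ∀ U : Set X, IsOpen U → U.Nonempty → ∃ N : ℕ, 0 < N ∧ f^[N] '' U = Set.univ

/-- `A` is an arc with endpoints `a` and `b`. -/
def IsArcEnds {X : Type*} [TopologicalSpace X] (A : Set X) (a b : X) : Prop :=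
  ∃ e : (Set.Icc (0:ℝ) 1) ≃ₜ A,
    (e ⟨0, by norm_num⟩ : X) = a ∧ (e ⟨1, by norm_num⟩ : X) = b

/-- `A` is a free arc with endpoints `a` and `b`. -/
def IsFreeArc {X : Type*} [TopologicalSpace X] (A : Set X) (a b : X) : Prop :=
  IsArcEnds A a b ∧ IsOpen (A \ {a, b})

/-- A regular periodic decomposition of length `m` for `f`. -/
def IsRegPerDecomp {X : Type*} [TopologicalSpace X] (f : X → X) (m : ℕ)
    (Ds : ZMod m → Set X) : Prop :=
  0 < m ∧ (∀ i, Ds i = closure (interior (Ds i))) ∧ (⋃ i, Ds i) = Set.univ ∧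
    (∀ i, f '' Ds i = Ds (i + 1)) ∧ (∀ i j, i ≠ j → IsNowhereDense (Ds i ∩ Ds j))

/-- `f` admits a terminal (maximal-length) regular periodic decomposition. -/
def HasTerminalDecomp {X : Type*} [TopologicalSpace X] (f : X → X) : Prop :=
  ∃ (m : ℕ) (Ds : ZMod m → Set X), IsRegPerDecomp f m Ds ∧
    ∀ (m' : ℕ) (Ds' : ZMod m' → Set X), IsRegPerDecomp f m' Ds' → m' ≤ m

/-- The induced map on the hyperspace of nonempty closed (= compact) subsets. -/
def hyperMap {X : Type*} [TopologicalSpace X] {f : X → X} (hf : Continuous f) :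
    NonemptyCompacts X → NonemptyCompacts X :=
  fun A => ⟨⟨f '' A, A.isCompact.image hf⟩, A.nonempty.image f⟩

/-- The set of connected components of `X \ {p}`. -/
def componentsAt (X : Type*) [TopologicalSpace X] (p : X) : Set (Set X) :=
  {C | ∃ x : X, x ≠ p ∧ C = connectedComponentIn ({p}ᶜ : Set X) x}

namespace Star12

def w : ℕ → ℤ
  | 0 => 0 | 1 => -5 | 2 => 0 | 3 => 5 | _ => 10

def w' : ℕ → ℤ
  | 0 => 0 | 1 => -5 | 2 => 0 | 3 => 5 | _ => 0

def W (k m : ℕ) : ℤ := 5 * ((m / 5 : ℕ) : ℤ) + (if m / 5 + 1 < k then w (m % 5) else w' (m % 5))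

@[simp] lemma w_0 : w 0 = 0 := rfl
@[simp] lemma w_1 : w 1 = -5 := rfl
@[simp] lemma w_2 : w 2 = 0 := rfl
@[simp] lemma w_3 : w 3 = 5 := rfl
@[simp] lemma w_4 : w 4 = 10 := rfl
@[simp] lemma w'_0 : w' 0 = 0 := rfl
@[simp] lemma w'_1 : w' 1 = -5 := rfl
@[simp] lemma w'_2 : w' 2 = 0 := rfl
@[simp] lemma w'_3 : w' 3 = 5 := rfl
@[simp] lemma w'_4 : w' 4 = 0 := rfl

lemma Wval (k q r : ℕ) (hr : r < 5) :
    W k (5*q+r) = 5 * (q : ℤ) + (if q + 1 < k then w r else w' r) := by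
  unfold W
  rw [show (5*q+r)/5 = q by omega, show (5*q+r)%5 = r by omega]

lemma W_zero (k : ℕ) : W k 0 = 0 := by
  have := Wval k 0 0 (by norm_num)
  simpa using this

lemma W_last (k : ℕ) (hk : 1 ≤ k) : W k (5*k) = 5*k := by
  have := Wval k k 0 (by norm_num)
  simp only [Nat.add_zero] at this
  rw [this]
  split_ifs <;> simp

/-- master case lemma about consecutive values of `W`. -/
lemma W_pair {k : ℕ} (hk : 2 ≤ k) (m : ℕ) (hm : m < 5*k) :
    (W k (m+1) - W k m = 5 ∨ W k (m+1) - W k m = -5) ∧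
    ((0 ≤ W k m ∧ 0 ≤ W k (m+1)) ∨
      (-5 ≤ W k m ∧ W k m ≤ 0 ∧ -5 ≤ W k (m+1) ∧ W k (m+1) ≤ 0 ∧ m ≤ 1)) ∧
    (-5 ≤ W k m ∧ W k m ≤ 5*k ∧ -5 ≤ W k (m+1) ∧ W k (m+1) ≤ 5*k) ∧
    (-6 ≤ W k m - m ∧ W k m - m ≤ 6 ∧ -6 ≤ W k (m+1) - (m+1) ∧ W k (m+1) - (m+1) ≤ 6) := by
  obtain ⟨q, r, hr, rfl⟩ : ∃ q r, r < 5 ∧ m = 5*q + r := ⟨m/5, m%5, by omega, by omega⟩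
  have hq : q < k := by omega
  rcases (show r = 0 ∨ r = 1 ∨ r = 2 ∨ r = 3 ∨ r = 4 by omega) with rfl|rfl|rfl|rfl|rfl
  · rw [Wval k q 0 (by norm_num), show 5*q+0+1 = 5*q+1 by ring, Wval k q 1 (by norm_num)]
    split_ifs <;> simp <;> omega
  · rw [Wval k q 1 (by norm_num), show 5*q+1+1 = 5*q+2 by ring, Wval k q 2 (by norm_num)]
    split_ifs <;> simp <;> omega
  · rw [Wval k q 2 (by norm_num), show 5*q+2+1 = 5*q+3 by ring, Wval k q 3 (by norm_num)]
    split_ifs <;> simp <;> omega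
  · rw [Wval k q 3 (by norm_num), show 5*q+3+1 = 5*q+4 by ring, Wval k q 4 (by norm_num)]
    split_ifs <;> simp <;> omega
  · rw [Wval k q 4 (by norm_num), show 5*q+4+1 = 5*(q+1)+0 by ring, Wval k (q+1) 0 (by norm_num)]
    split_ifs <;> simp <;> omega

lemma W_mul5 (k m : ℕ) : (5:ℤ) ∣ W k m := by
  obtain ⟨q, r, hr, rfl⟩ : ∃ q r, r < 5 ∧ m = 5*q + r := ⟨m/5, m%5, by omega, by omega⟩
  rcases (show r = 0 ∨ r = 1 ∨ r = 2 ∨ r = 3 ∨ r = 4 by omega) with rfl|rfl|rfl|rfl|rfl <;>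
    rw [Wval k q _ (by norm_num)] <;> split_ifs <;> simp <;> omega


noncomputable def hmap (k : ℕ) (t : ℝ) : ℝ :=
  ∑ m ∈ Finset.range (5*k), ((W k (m+1) - W k m : ℤ) : ℝ) * max 0 (min 1 (t - m))

lemma hmap_continuous (k : ℕ) : Continuous (hmap k) := by
  unfold hmap
  refine continuous_finset_sum _ (fun m _ => ?_)
  exact continuous_const.mul ((continuous_const.max
    (continuous_const.min (continuous_id.sub continuous_const))))

lemma hmap_eval {k : ℕ} (m : ℕ) (hm : m < 5*k) {t : ℝ} (h1 : (m:ℝ) ≤ t) (h2 : t ≤ m+1) :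
    hmap k t = W k m + (W k (m+1) - W k m) * (t - m) := by
  unfold hmap
  have hsplit : Finset.range (5*k) = Finset.range (m+1) ∪ Finset.Ico (m+1) (5*k) := by
    rw [Finset.range_eq_Ico]
    rw [Finset.range_eq_Ico, Finset.Ico_union_Ico_eq_Ico (a := 0) (b := m+1) (c := 5*k) (by omega) (by omega)]
  rw [hsplit, Finset.sum_union (by
    rw [Finset.range_eq_Ico]
    exact Finset.Ico_disjoint_Ico_consecutive 0 (m+1) (5*k))]
  have h2nd : ∑ i ∈ Finset.Ico (m+1) (5*k), ((W k (i+1) - W k i : ℤ) : ℝ) * max 0 (min 1 (t - i)) = 0 := by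
    refine Finset.sum_eq_zero (fun i hi => ?_)
    have hi' := (Finset.mem_Ico.mp hi).1
    have : t - i ≤ 0 := by
      have : (m:ℝ) + 1 ≤ i := by exact_mod_cast hi'
      linarith
    rw [min_eq_right (by linarith), max_eq_left this, mul_zero]
  rw [h2nd, add_zero, Finset.sum_range_succ]
  have h1st : ∑ i ∈ Finset.range m, ((W k (i+1) - W k i : ℤ) : ℝ) * max 0 (min 1 (t - i)) = W k m := by
    have : ∀ i ∈ Finset.range m, ((W k (i+1) - W k i : ℤ) : ℝ) * max 0 (min 1 (t - i))
        = ((W k (i+1) : ℤ) : ℝ) - ((W k i : ℤ) : ℝ) := by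
      intro i hi
      have hi' := Finset.mem_range.mp hi
      have h1i : (1:ℝ) ≤ t - i := by
        have : (i:ℝ) + 1 ≤ m := by exact_mod_cast hi'
        linarith
      rw [min_eq_left h1i, max_eq_right zero_le_one, mul_one, Int.cast_sub]
    rw [Finset.sum_congr rfl this, Finset.sum_range_sub (fun i => ((W k i : ℤ) : ℝ))]
    rw [W_zero]
    simp
  rw [h1st]
  have ht : max 0 (min 1 (t - m)) = t - m := by
    rw [min_eq_right (by linarith), max_eq_right (by linarith)]
  rw [ht]
  push_cast
  ring

lemma affineImage (c d u v : ℝ) (huv : u ≤ v) (hd : d ≠ 0) :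
    (fun t => c + d * t) '' Icc u v =
      Icc (min (c + d * u) (c + d * v)) (max (c + d * u) (c + d * v)) := by
  rcases lt_or_gt_of_ne hd with hneg | hpos
  · rw [min_eq_right (by nlinarith), max_eq_left (by nlinarith)]
    ext y
    simp only [mem_image, mem_Icc]
    constructor
    · rintro ⟨t, ⟨ht1, ht2⟩, rfl⟩
      constructor <;> nlinarith
    · rintro ⟨hy1, hy2⟩
      refine ⟨(y - c) / d, ⟨?_, ?_⟩, by field_simp; ring⟩
      · rw [le_div_iff_of_neg hneg]; nlinarith
      · rw [div_le_iff_of_neg hneg]; nlinarith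
  · rw [min_eq_left (by nlinarith), max_eq_right (by nlinarith)]
    ext y
    simp only [mem_image, mem_Icc]
    constructor
    · rintro ⟨t, ⟨ht1, ht2⟩, rfl⟩
      constructor <;> nlinarith
    · rintro ⟨hy1, hy2⟩
      refine ⟨(y - c) / d, ⟨?_, ?_⟩, by field_simp; ring⟩
      · rw [le_div_iff₀ hpos]; nlinarith
      · rw [div_le_iff₀ hpos]; nlinarith


section Star

variable {T : Type*} [MetricSpace T] {n : ℕ} {B : Fin n → Set T}

/-- parametrization of beam `i` by `[0, 5k]`, clamped. -/
noncomputable def psi (E : ∀ i, (Set.Icc (0:ℝ) 1) ≃ₜ (B i)) (k : ℕ) (i : Fin n) (t : ℝ) : T :=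
  ((E i) (Set.projIcc 0 1 zero_le_one (t / (5*k))) : T)

noncomputable def phi [NeZero n] (E : ∀ i, (Set.Icc (0:ℝ) 1) ≃ₜ (B i)) (k : ℕ)
    (i : Fin n) (s : ℝ) : T :=
  if 0 ≤ s then psi E k i s else psi E k (i+1) (-s)

noncomputable def F [NeZero n] (E : ∀ i, (Set.Icc (0:ℝ) 1) ≃ₜ (B i)) (k : ℕ)
    (ix : T → Fin n) (hix : ∀ x, x ∈ B (ix x)) (x : T) : T :=
  phi E k (ix x) (hmap k (5*k * (((E (ix x)).symm ⟨x, hix x⟩ : Set.Icc (0:ℝ) 1) : ℝ)))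

variable (E : ∀ i, (Set.Icc (0:ℝ) 1) ≃ₜ (B i)) {k : ℕ}

lemma psi_mem (i : Fin n) (t : ℝ) : psi E k i t ∈ B i := ((E i) _).2

lemma psi_continuous (i : Fin n) : Continuous (psi E k i) := by
  unfold psi
  exact continuous_subtype_val.comp ((E i).continuous.comp
    (continuous_projIcc.comp (continuous_id.div_const _)))

lemma psi_apply (hk : 2 ≤ k) (i : Fin n) {t : ℝ} (h1 : 0 ≤ t) (h2 : t ≤ 5*k) :
    psi E k i t = ((E i) ⟨t / (5*k), by
      constructor
      · positivity
      · rw [div_le_one (by positivity)]; exact h2⟩ : T) := by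
  unfold psi
  rw [Set.projIcc_of_mem]
  exact ⟨div_nonneg h1 (by positivity), by rw [div_le_one (by have : (2:ℝ) ≤ k := (by exact_mod_cast hk); linarith)]; exact h2⟩

lemma psi_inj (hk : 2 ≤ k) (i : Fin n) {t t' : ℝ} (h1 : 0 ≤ t) (h2 : t ≤ 5*k)
    (h1' : 0 ≤ t') (h2' : t' ≤ 5*k) (heq : psi E k i t = psi E k i t') : t = t' := by
  rw [psi_apply E hk i h1 h2, psi_apply E hk i h1' h2'] at heq
  have h5k : (0:ℝ) < 5*k := by positivity
  have := (E i).injective (Subtype.val_injective heq)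
  have := congrArg Subtype.val this
  simp only at this
  field_simp at this
  exact this

variable {a : T} {e : Fin n → T}
variable (hk : 2 ≤ k)
  (hE0 : ∀ i, ((E i) ⟨0, by norm_num⟩ : T) = a)
  (hE1 : ∀ i, ((E i) ⟨1, by norm_num⟩ : T) = e i)

include hk hE0 in
lemma psi_zero (i : Fin n) : psi E k i 0 = a := by
  rw [psi_apply E hk i le_rfl (by positivity)]
  convert hE0 i using 3
  simp

include hk hE1 in
lemma psi_last (i : Fin n) : psi E k i (5*k) = e i := by
  rw [psi_apply E hk i (by positivity) le_rfl]
  convert hE1 i using 3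
  field_simp

include hk hE0 in
lemma psi_eq_center (i : Fin n) {t : ℝ} (h1 : 0 ≤ t) (h2 : t ≤ 5*k)
    (h : psi E k i t = a) : t = 0 := by
  refine psi_inj E hk i h1 h2 le_rfl (by positivity) ?_
  rw [h, psi_zero E hk hE0 i]

include hk hE0 in
lemma phi_zero [NeZero n] (i : Fin n) : phi E k i 0 = a := by
  unfold phi
  rw [if_pos le_rfl]
  exact psi_zero E hk hE0 i

lemma phi_of_nonneg [NeZero n] (i : Fin n) {s : ℝ} (hs : 0 ≤ s) :
    phi E k i s = psi E k i s := by unfold phi; rw [if_pos hs]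

include hk hE0 in
lemma phi_of_nonpos [NeZero n] (i : Fin n) {s : ℝ} (hs : s ≤ 0) :
    phi E k i s = psi E k (i+1) (-s) := by
  unfold phi
  rcases eq_or_lt_of_le hs with rfl | h
  · rw [if_pos le_rfl, neg_zero, psi_zero E hk hE0 i, psi_zero E hk hE0 (i+1)]
  · rw [if_neg (by linarith)]

include hk hE0 in
lemma phi_continuous [NeZero n] (i : Fin n) : Continuous (phi E k i) := by
  unfold phi
  refine Continuous.if_le ?_ ?_ continuous_const continuous_id (fun s hs => ?_)
  · exact psi_continuous E i
  · exact (psi_continuous E (i+1)).comp continuous_neg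
  · rw [← hs, neg_zero, psi_zero E hk hE0 i, psi_zero E hk hE0 (i+1)]

end Star

section Star2

variable {T : Type*} [MetricSpace T] {n : ℕ} [NeZero n] {B : Fin n → Set T}
  (E : ∀ i, (Set.Icc (0:ℝ) 1) ≃ₜ (B i)) {k : ℕ} {a : T} {e : Fin n → T}
  (hk : 2 ≤ k)
  (hE0 : ∀ i, ((E i) ⟨0, by norm_num⟩ : T) = a)
  (hmeet : ∀ i j, i ≠ j → B i ∩ B j = {a})
  (ix : T → Fin n) (hix : ∀ x, x ∈ B (ix x))

lemma hmap_zero (hk : 2 ≤ k) : hmap k 0 = 0 := by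
  rw [hmap_eval 0 (by omega) (by norm_num) (by norm_num), W_zero]
  simp

lemma hmap_last (hk : 2 ≤ k) : hmap k (5*(k:ℝ)) = 5*k := by
  have h5 : (5*k-1) + 1 = 5*k := by omega
  have hc : ((5*k-1 : ℕ) : ℝ) = 5*(k:ℝ) - 1 := by
    push_cast [Nat.cast_sub (by omega : 1 ≤ 5*k)]
    ring
  rw [hmap_eval (5*k-1) (by omega) (by rw [hc]; linarith) (by rw [hc]; linarith), h5, W_last k (by omega), hc]
  push_cast
  ring

include hE0 in
lemma symm_at_center (i : Fin n) (hj : a ∈ B i) : (((E i).symm ⟨a, hj⟩ : Set.Icc (0:ℝ) 1) : ℝ) = 0 := by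
  have : (⟨a, hj⟩ : B i) = (E i) ⟨0, by norm_num⟩ := Subtype.ext (hE0 i).symm
  rw [this, Homeomorph.symm_apply_apply]

include hk hE0 hmeet in
lemma F_on (i : Fin n) (y : T) (hy : y ∈ B i) :
    F E k ix hix y = phi E k i (hmap k (5*k * (((E i).symm ⟨y, hy⟩ : Set.Icc (0:ℝ) 1) : ℝ))) := by
  unfold F
  by_cases hcase : ix y = i
  · subst hcase
    rfl
  · have hya : y = a := by
      have := hmeet (ix y) i hcase
      have : y ∈ ({a} : Set T) := this ▸ ⟨hix y, hy⟩
      exact this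
    subst hya
    rw [symm_at_center E hE0 (ix y) (hix y), symm_at_center E hE0 i hy]
    rw [mul_zero, hmap_zero hk, phi_zero E hk hE0, phi_zero E hk hE0]

include hk hE0 hmeet in
lemma F_eq (i : Fin n) {t : ℝ} (h1 : 0 ≤ t) (h2 : t ≤ 5*k) :
    F E k ix hix (psi E k i t) = phi E k i (hmap k t) := by
  have hmem := psi_mem (k := k) E i t
  rw [F_on E hk hE0 hmeet ix hix i _ hmem]
  congr 2
  have h5k : (0:ℝ) < 5*k := by positivity
  have : (⟨psi E k i t, hmem⟩ : B i) = (E i) ⟨t/(5*k), by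
      constructor
      · positivity
      · rw [div_le_one h5k]; exact h2⟩ := by
    exact Subtype.ext (psi_apply E hk i h1 h2)
  rw [this, Homeomorph.symm_apply_apply]
  field_simp

include E in
lemma B_closed (i : Fin n) : IsClosed (B i) := by
  have : B i = Set.range (fun p : Set.Icc (0:ℝ) 1 => ((E i) p : T)) := by
    ext x
    constructor
    · intro hx; exact ⟨(E i).symm ⟨x, hx⟩, by simp⟩
    · rintro ⟨p, rfl⟩; exact ((E i) p).2
  rw [this]
  
  exact (isCompact_range (continuous_subtype_val.comp (E i).continuous)).isClosed

include hk hE0 hmeet in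
lemma F_continuous (hcover : (⋃ i, B i) = Set.univ) : Continuous (F E k ix hix) := by
  refine (locallyFinite_of_finite B).continuous hcover (B_closed E) (fun i => ?_)
  rw [continuousOn_iff_continuous_restrict]
  have : (B i).domRestrict (F E k ix hix) = fun y : B i =>
      phi E k i (hmap k (5*k * (((E i).symm y : Set.Icc (0:ℝ) 1) : ℝ))) := by
    funext y
    rw [Set.domRestrict_apply, F_on E hk hE0 hmeet ix hix i y.1 y.2]
  rw [this]
  exact (phi_continuous E hk hE0 i).comp ((hmap_continuous k).comp
    (continuous_const.mul (continuous_subtype_val.comp (E i).symm.continuous)))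

end Star2

section Star3

variable {T : Type*} [MetricSpace T] {n : ℕ} [NeZero n] {B : Fin n → Set T}
  (E : ∀ i, (Set.Icc (0:ℝ) 1) ≃ₜ (B i)) {k : ℕ} {a : T} {e : Fin n → T}
  (hk : 2 ≤ k)
  (hE0 : ∀ i, ((E i) ⟨0, by norm_num⟩ : T) = a)
  (hmeet : ∀ i j, i ≠ j → B i ∩ B j = {a})
  (ix : T → Fin n) (hix : ∀ x, x ∈ B (ix x))

lemma hmap_piece (hk : 2 ≤ k) {m : ℕ} (hm : m < 5*k) {u v : ℝ} (hmu : (m:ℝ) ≤ u)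
    (huv : u ≤ v) (hv : v ≤ (m:ℝ)+1) :
    hmap k '' Icc u v = Icc (min (hmap k u) (hmap k v)) (max (hmap k u) (hmap k v)) := by
  have hd := (W_pair hk m hm).1
  set d : ℝ := ((W k (m+1) - W k m : ℤ) : ℝ) with hdd
  set c : ℝ := ((W k m : ℤ) : ℝ) - d * m with hcc
  have hdne : d ≠ 0 := by rcases hd with h|h <;> rw [hdd, h] <;> norm_num
  have hcongr : ∀ t ∈ Icc u v, hmap k t = c + d * t := by
    intro t ht
    rw [hmap_eval m hm (le_trans hmu ht.1) (le_trans ht.2 hv), hcc, hdd]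
    push_cast
    ring
  rw [Set.image_congr hcongr, affineImage c d u v huv hdne,
    show c + d * u = hmap k u from (hcongr u ⟨le_rfl, huv⟩).symm,
    show c + d * v = hmap k v from (hcongr v ⟨huv, le_rfl⟩).symm]

lemma hmap_between (hk : 2 ≤ k) {m : ℕ} (hm : m < 5*k) {t : ℝ} (h1 : (m:ℝ) ≤ t)
    (h2 : t ≤ (m:ℝ)+1) :
    min ((W k m : ℤ):ℝ) ((W k (m+1) : ℤ):ℝ) ≤ hmap k t ∧
    hmap k t ≤ max ((W k m : ℤ):ℝ) ((W k (m+1) : ℤ):ℝ) := by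
  rw [hmap_eval m hm h1 h2]
  rcases (W_pair hk m hm).1 with h|h
  · have hD : ((W k (m+1) : ℤ):ℝ) = ((W k m : ℤ):ℝ) + 5 := by
      have : W k (m+1) = W k m + 5 := by omega
      exact_mod_cast congrArg (fun z : ℤ => (z : ℝ)) this
    have hle : ((W k m : ℤ):ℝ) ≤ ((W k (m+1) : ℤ):ℝ) := by linarith
    rw [min_eq_left hle, max_eq_right hle]
    constructor <;> nlinarith [hD]
  · have hD : ((W k (m+1) : ℤ):ℝ) = ((W k m : ℤ):ℝ) - 5 := by
      have : W k (m+1) = W k m - 5 := by omega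
      exact_mod_cast congrArg (fun z : ℤ => (z : ℝ)) this
    have hle : ((W k (m+1) : ℤ):ℝ) ≤ ((W k m : ℤ):ℝ) := by linarith
    rw [min_eq_right hle, max_eq_left hle]
    constructor <;> nlinarith [hD]

include hk hE0 hmeet in
lemma seg_core (i : Fin n) {m : ℕ} (hm : m < 5*k) {u v : ℝ} (hmu : (m:ℝ) ≤ u)
    (huv : u ≤ v) (hv : v ≤ (m:ℝ)+1) :
    (0 ≤ W k m ∧ 0 ≤ W k (m+1) ∧
      F E k ix hix '' (psi E k i '' Icc u v) =
        psi E k i '' Icc (min (hmap k u) (hmap k v)) (max (hmap k u) (hmap k v))) ∨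
    (W k m ≤ 0 ∧ W k (m+1) ≤ 0 ∧ m ≤ 1 ∧
      F E k ix hix '' (psi E k i '' Icc u v) =
        psi E k (i+1) '' Icc (-(max (hmap k u) (hmap k v))) (-(min (hmap k u) (hmap k v)))) := by
  have hm0 : (0:ℝ) ≤ m := Nat.cast_nonneg m
  have hm5k : (m:ℝ)+1 ≤ 5*k := by
    have : (m:ℝ) + 1 ≤ (5*k : ℕ) := by exact_mod_cast hm
    simpa [Nat.cast_mul] using this
  have hsub : Icc u v ⊆ Icc (0:ℝ) (5*k) := fun t ht =>
    ⟨le_trans hm0 (le_trans hmu ht.1), le_trans ht.2 (le_trans hv hm5k)⟩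
  have himc : F E k ix hix '' (psi E k i '' Icc u v) = phi E k i '' (hmap k '' Icc u v) := by
    rw [← Set.image_comp, ← Set.image_comp]
    refine Set.image_congr (fun t ht => ?_)
    exact F_eq E hk hE0 hmeet ix hix i (hsub ht).1 (hsub ht).2
  rw [himc, hmap_piece hk hm hmu huv hv]
  have hbu := hmap_between hk hm hmu (le_trans huv hv)
  have hbv := hmap_between hk hm (le_trans hmu huv) hv
  have hminmax : u ≤ v := huv
  rcases (W_pair hk m hm).2.1 with ⟨hs1, hs2⟩ | ⟨hs1, hs2, hs3, hs4, hs5⟩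
  · left
    refine ⟨hs1, hs2, ?_⟩
    have hα : 0 ≤ min (hmap k u) (hmap k v) := by
      have h1 : (0:ℝ) ≤ min ((W k m : ℤ):ℝ) ((W k (m+1) : ℤ):ℝ) := by
        simp only [le_min_iff]
        exact ⟨by exact_mod_cast hs1, by exact_mod_cast hs2⟩
      exact le_min (le_trans h1 hbu.1) (le_trans h1 hbv.1)
    refine Set.image_congr (fun s hs => ?_)
    exact phi_of_nonneg E i (le_trans hα hs.1)
  · right
    refine ⟨hs2, hs4, hs5, ?_⟩
    have hβ : max (hmap k u) (hmap k v) ≤ 0 := by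
      have h1 : max ((W k m : ℤ):ℝ) ((W k (m+1) : ℤ):ℝ) ≤ 0 := by
        simp only [max_le_iff]
        exact ⟨by exact_mod_cast hs2, by exact_mod_cast hs4⟩
      exact max_le (le_trans hbu.2 h1) (le_trans hbv.2 h1)
    have : phi E k i '' Icc (min (hmap k u) (hmap k v)) (max (hmap k u) (hmap k v)) =
        (fun s => psi E k (i+1) (-s)) '' Icc (min (hmap k u) (hmap k v)) (max (hmap k u) (hmap k v)) := by
      refine Set.image_congr (fun s hs => ?_)
      exact phi_of_nonpos E hk hE0 i (le_trans hs.2 hβ)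
    rw [this]
    have : (fun s => psi E k (i+1) (-s)) '' Icc (min (hmap k u) (hmap k v)) (max (hmap k u) (hmap k v)) =
        psi E k (i+1) '' (Neg.neg '' Icc (min (hmap k u) (hmap k v)) (max (hmap k u) (hmap k v))) := by
      rw [Set.image_image]
    rw [this, Set.image_neg_Icc]

end Star3

section Star4

variable {T : Type*} [MetricSpace T] {n : ℕ} [NeZero n] {B : Fin n → Set T}
  (E : ∀ i, (Set.Icc (0:ℝ) 1) ≃ₜ (B i)) {k : ℕ} {a : T} {e : Fin n → T}
  (hk : 2 ≤ k)
  (hE0 : ∀ i, ((E i) ⟨0, by norm_num⟩ : T) = a)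
  (hmeet : ∀ i j, i ≠ j → B i ∩ B j = {a})
  (ix : T → Fin n) (hix : ∀ x, x ∈ B (ix x))

lemma W_50 {p : ℕ} (hp : p ≤ k) : W k (5*p) = 5*p := by
  have := Wval k p 0 (by norm_num)
  simp only [Nat.add_zero] at this
  rw [this]; split_ifs <;> simp

lemma W_51 {p : ℕ} : W k (5*p+1) = 5*(p:ℤ) - 5 := by
  rw [Wval k p 1 (by norm_num)]; split_ifs <;> simp <;> ring

lemma W_52 {p : ℕ} : W k (5*p+2) = 5*p := by
  rw [Wval k p 2 (by norm_num)]; split_ifs <;> simp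

lemma W_53 {p : ℕ} : W k (5*p+3) = 5*(p:ℤ)+5 := by
  rw [Wval k p 3 (by norm_num)]; split_ifs <;> simp

lemma W_54 {p : ℕ} (hp : p + 1 < k) : W k (5*p+4) = 5*(p:ℤ)+10 := by
  rw [Wval k p 4 (by norm_num), if_pos hp]
  simp

lemma hmap_nat1 {m : ℕ} (hm : m < 5*k) : hmap k (m:ℝ) = ((W k m : ℤ):ℝ) := by
  rw [hmap_eval m hm le_rfl (by linarith)]; ring

lemma hmap_nat2 {m : ℕ} (hm : m < 5*k) : hmap k ((m:ℝ)+1) = ((W k (m+1) : ℤ):ℝ) := by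
  rw [hmap_eval m hm (by linarith) le_rfl]; push_cast; ring

include hk hE0 hmeet in
lemma sub_image_pos (i : Fin n) (m : ℕ) (hm : m < 5*k) (α β : ℤ)
    (hα : W k m = α) (hβ : W k (m+1) = β) (h0 : 0 ≤ α) (h0' : 0 ≤ β) :
    F E k ix hix '' (psi E k i '' Icc (m:ℝ) ((m:ℝ)+1)) =
      psi E k i '' Icc ((min α β : ℤ):ℝ) ((max α β : ℤ):ℝ) := by
  rcases seg_core E hk hE0 hmeet ix hix i hm le_rfl (by linarith) le_rfl with
    ⟨h1, h2, h3⟩ | ⟨h1, h2, _, h4⟩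
  · rw [h3, hmap_nat1 hm, hmap_nat2 hm, hα, hβ]
    congr 1 <;> push_cast <;> simp
  · exfalso
    have := (W_pair hk m hm).1
    omega

include hk hE0 hmeet in
lemma sub_image_neg (i : Fin n) :
    F E k ix hix '' (psi E k i '' Icc (0:ℝ) 1) = psi E k (i+1) '' Icc (0:ℝ) 5 := by
  have h0 : (0:ℕ) < 5*k := by omega
  have hW1 : W k 1 = -5 := by have := W_51 (k := k) (p := 0); simpa using this
  rcases seg_core (u := (0:ℝ)) (v := (1:ℝ)) E hk hE0 hmeet ix hix i h0
      (by norm_num) (by norm_num) (by norm_num) with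
    ⟨h1, h2, h3⟩ | ⟨h1, h2, _, h4⟩
  · exfalso
    rw [hW1] at h2
    omega
  · have e1 : hmap k ((0:ℕ):ℝ) = ((W k 0 : ℤ):ℝ) := hmap_nat1 h0
    have e2 : hmap k (((0:ℕ):ℝ)+1) = ((W k 1 : ℤ):ℝ) := hmap_nat2 h0
    simp only [Nat.cast_zero] at e1 e2
    rw [zero_add] at e2
    rw [h4, e1, e2, W_zero, hW1]
    norm_num

include hk hE0 hmeet in
lemma seg_step (i : Fin n) {m : ℕ} (hm : m < 5*k) {u v : ℝ} (hmu : (m:ℝ) ≤ u)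
    (huv : u ≤ v) (hv : v ≤ (m:ℝ)+1) :
    ∃ (i' : Fin n) (u' v' : ℝ), 0 ≤ u' ∧ v' ≤ 5*(k:ℝ) ∧ v' - u' = 5*(v-u) ∧
      F E k ix hix '' (psi E k i '' Icc u v) = psi E k i' '' Icc u' v' := by
  have hbu := hmap_between hk hm hmu (le_trans huv hv)
  have hbv := hmap_between hk hm (le_trans hmu huv) hv
  have hWb := (W_pair hk m hm).2.2.1
  have hlen : max (hmap k u) (hmap k v) - min (hmap k u) (hmap k v) = 5*(v-u) := by
    have hduv : hmap k v - hmap k u = (((W k (m+1) : ℤ):ℝ) - ((W k m : ℤ):ℝ)) * (v - u) := by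
      rw [hmap_eval m hm hmu (le_trans huv hv), hmap_eval m hm (le_trans hmu huv) hv]
      ring
    have habs : |hmap k v - hmap k u| = |(((W k (m+1) : ℤ):ℝ) - ((W k m : ℤ):ℝ))| * (v - u) := by
      rw [hduv, abs_mul, abs_of_nonneg (by linarith : (0:ℝ) ≤ v - u)]
    rw [max_sub_min_eq_abs]
    first
      | rw [habs]
      | rw [abs_sub_comm, habs]
    rcases (W_pair hk m hm).1 with h|h
    · have hc : ((W k (m+1) : ℤ):ℝ) - ((W k m : ℤ):ℝ) = 5 := by
        have := congrArg (Int.cast : ℤ → ℝ) h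
        push_cast at this
        linarith
      rw [hc, abs_of_nonneg (by norm_num : (0:ℝ) ≤ 5)]
    · have hc : ((W k (m+1) : ℤ):ℝ) - ((W k m : ℤ):ℝ) = -5 := by
        have := congrArg (Int.cast : ℤ → ℝ) h
        push_cast at this
        linarith
      rw [hc, abs_of_nonpos (by norm_num : (-5:ℝ) ≤ 0)]
      ring
  rcases seg_core E hk hE0 hmeet ix hix i hm hmu huv hv with
    ⟨h1, h2, h3⟩ | ⟨h1, h2, _, h4⟩
  · refine ⟨i, _, _, ?_, ?_, ?_, h3⟩
    · have h1' : (0:ℝ) ≤ ((W k m : ℤ):ℝ) := by exact_mod_cast h1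
      have h2' : (0:ℝ) ≤ ((W k (m+1) : ℤ):ℝ) := by exact_mod_cast h2
      exact le_min (le_trans (le_min h1' h2') hbu.1) (le_trans (le_min h1' h2') hbv.1)
    · have h1' : ((W k m : ℤ):ℝ) ≤ 5*(k:ℝ) := by exact_mod_cast hWb.2.1
      have h2' : ((W k (m+1) : ℤ):ℝ) ≤ 5*(k:ℝ) := by exact_mod_cast hWb.2.2.2
      exact max_le (le_trans hbu.2 (max_le h1' h2')) (le_trans hbv.2 (max_le h1' h2'))
    · exact hlen
  · refine ⟨i+1, _, _, ?_, ?_, ?_, h4⟩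
    · have h1' : ((W k m : ℤ):ℝ) ≤ 0 := by exact_mod_cast h1
      have h2' : ((W k (m+1) : ℤ):ℝ) ≤ 0 := by exact_mod_cast h2
      have : max (hmap k u) (hmap k v) ≤ 0 :=
        max_le (le_trans hbu.2 (max_le h1' h2')) (le_trans hbv.2 (max_le h1' h2'))
      linarith
    · have h1' : (-5:ℝ) ≤ ((W k m : ℤ):ℝ) := by exact_mod_cast hWb.1
      have h2' : (-5:ℝ) ≤ ((W k (m+1) : ℤ):ℝ) := by exact_mod_cast hWb.2.2.1
      have h5 : (-5:ℝ) ≤ min (hmap k u) (hmap k v) :=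
        le_min (le_trans (le_min h1' h2') hbu.1) (le_trans (le_min h1' h2') hbv.1)
      have : (5:ℝ) ≤ 5*(k:ℝ) := by
        have : (2:ℝ) ≤ (k:ℝ) := by exact_mod_cast hk
        linarith
      linarith
    · linarith [hlen]

end Star4

section Star5

variable {T : Type*} [MetricSpace T] {n : ℕ} [NeZero n] {B : Fin n → Set T}
  (E : ∀ i, (Set.Icc (0:ℝ) 1) ≃ₜ (B i)) {k : ℕ} {a : T} {e : Fin n → T}
  (hk : 2 ≤ k)
  (hE0 : ∀ i, ((E i) ⟨0, by norm_num⟩ : T) = a)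
  (hmeet : ∀ i j, i ≠ j → B i ∩ B j = {a})
  (ix : T → Fin n) (hix : ∀ x, x ∈ B (ix x))

lemma floor_piece {u : ℝ} (hu : 0 ≤ u) :
    ((⌊u⌋.toNat : ℕ):ℝ) ≤ u ∧ u < ((⌊u⌋.toNat : ℕ):ℝ) + 1 := by
  have h0 : (0:ℤ) ≤ ⌊u⌋ := Int.floor_nonneg.2 hu
  have hc : ((⌊u⌋.toNat : ℕ):ℝ) = ((⌊u⌋ : ℤ):ℝ) := by
    exact_mod_cast congrArg (fun z : ℤ => (z:ℝ)) (Int.toNat_of_nonneg h0)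
  rw [hc]
  exact ⟨Int.floor_le u, Int.lt_floor_add_one u⟩

lemma ceil_piece {u : ℝ} (hu : 0 ≤ u) :
    u ≤ ((⌈u⌉.toNat : ℕ):ℝ) ∧ ((⌈u⌉.toNat : ℕ):ℝ) < u + 1 := by
  have h0 : (0:ℤ) ≤ ⌈u⌉ := Int.ceil_nonneg hu
  have hc : ((⌈u⌉.toNat : ℕ):ℝ) = ((⌈u⌉ : ℤ):ℝ) := by
    exact_mod_cast congrArg (fun z : ℤ => (z:ℝ)) (Int.toNat_of_nonneg h0)
  rw [hc]
  exact ⟨Int.le_ceil u, Int.ceil_lt_add_one u⟩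

include hk hE0 hmeet in
lemma piece_cell (i : Fin n) {m : ℕ} (hm : m < 5*k) :
    ∃ (i' : Fin n) (p : ℕ), p < k ∧
      F E k ix hix '' (psi E k i '' Icc (m:ℝ) ((m:ℝ)+1)) =
        psi E k i' '' Icc (5*(p:ℝ)) (5*(p:ℝ)+5) := by
  have hdiff := (W_pair hk m hm).1
  have hb := (W_pair hk m hm).2.2.1
  rcases seg_core (u := (m:ℝ)) (v := (m:ℝ)+1) E hk hE0 hmeet ix hix i hm le_rfl
      (by linarith) le_rfl with ⟨h1, h2, h3⟩ | ⟨h1, h2, _, h4⟩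
  · have hex : ∃ p : ℕ, p < k ∧ min (W k m) (W k (m+1)) = 5*(p:ℤ) ∧
        max (W k m) (W k (m+1)) = 5*(p:ℤ)+5 := by
      obtain ⟨pz, hpz⟩ := W_mul5 k m
      rcases hdiff with h|h
      · have hmin : min (W k m) (W k (m+1)) = W k m := min_eq_left (by omega)
        have hmax : max (W k m) (W k (m+1)) = W k (m+1) := max_eq_right (by omega)
        exact ⟨pz.toNat, by omega, by omega, by omega⟩
      · have hmin : min (W k m) (W k (m+1)) = W k (m+1) := min_eq_right (by omega)
        have hmax : max (W k m) (W k (m+1)) = W k m := max_eq_left (by omega)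
        refine ⟨(pz-1).toNat, by omega, by omega, by omega⟩
    obtain ⟨p, hp, hpmin, hpmax⟩ := hex
    refine ⟨i, p, hp, ?_⟩
    rw [h3, hmap_nat1 hm, hmap_nat2 hm]
    have c1 : min ((W k m : ℤ):ℝ) ((W k (m+1) : ℤ):ℝ) = 5*(p:ℝ) := by
      rw [← Int.cast_min, hpmin]
      push_cast
      ring
    have c2 : max ((W k m : ℤ):ℝ) ((W k (m+1) : ℤ):ℝ) = 5*(p:ℝ)+5 := by
      rw [← Int.cast_max, hpmax]
      push_cast
      ring
    rw [c1, c2]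
  · obtain ⟨pz, hpz⟩ := W_mul5 k m
    have hcase : (W k m = 0 ∧ W k (m+1) = -5) ∨ (W k m = -5 ∧ W k (m+1) = 0) := by omega
    refine ⟨i+1, 0, by omega, ?_⟩
    rw [h4, hmap_nat1 hm, hmap_nat2 hm]
    rcases hcase with ⟨hA, hB⟩ | ⟨hA, hB⟩ <;> rw [hA, hB] <;> norm_num

include hk hE0 hmeet in
lemma grow0 (i : Fin n) {u v : ℝ} (hu : 0 ≤ u) (hlen : 2 ≤ v - u) (hv : v ≤ 5*(k:ℝ)) :
    ∃ (N : ℕ) (i' : Fin n) (p : ℕ), p < k ∧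
      psi E k i' '' Icc (5*(p:ℝ)) (5*(p:ℝ)+5) ⊆
        (F E k ix hix)^[N] '' (psi E k i '' Icc u v) := by
  set m : ℕ := ⌈u⌉.toNat with hmdef
  obtain ⟨hm1, hm2⟩ := ceil_piece hu
  have hmlt : m < 5*k := by
    have : ((m:ℕ):ℝ) < 5*(k:ℝ) := by linarith
    exact_mod_cast (by push_cast; linarith : ((m:ℕ):ℝ) < ((5*k : ℕ):ℝ))
  obtain ⟨i', p, hp, himg⟩ := piece_cell E hk hE0 hmeet ix hix i hmlt
  refine ⟨1, i', p, hp, ?_⟩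
  rw [Function.iterate_one]
  rw [← himg]
  refine Set.image_mono (Set.image_mono ?_)
  exact Set.Icc_subset_Icc hm1 (by linarith)

include hk hE0 hmeet in
lemma grow (j : ℕ) : ∀ (i : Fin n) (u v : ℝ), 0 ≤ u → u < v → v ≤ 5*(k:ℝ) →
    2 ≤ 2^j * (v - u) →
    ∃ (N : ℕ) (i' : Fin n) (p : ℕ), p < k ∧
      psi E k i' '' Icc (5*(p:ℝ)) (5*(p:ℝ)+5) ⊆
        (F E k ix hix)^[N] '' (psi E k i '' Icc u v) := by
  induction j with
  | zero =>
    intro i u v hu huv hv h2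
    exact grow0 E hk hE0 hmeet ix hix i hu (by linarith [h2]) hv
  | succ j IH =>
    intro i u v hu huv hv h2
    by_cases hbig : 2 ≤ v - u
    · exact grow0 E hk hE0 hmeet ix hix i hu hbig hv
    · push_neg at hbig
      have hpow : (0:ℝ) < 2^j := by positivity
      set m : ℕ := ⌊u⌋.toNat with hmdef
      obtain ⟨hm1, hm2⟩ := floor_piece hu
      have hmlt : m < 5*k := by
        have : ((m:ℕ):ℝ) < ((5*k:ℕ):ℝ) := by push_cast; linarith
        exact_mod_cast this
      by_cases hvsmall : v ≤ (m:ℝ)+1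
      · obtain ⟨i', u', v', h0', h5k', hlen', himg'⟩ :=
          seg_step E hk hE0 hmeet ix hix i hmlt hm1 (le_of_lt huv) hvsmall
        have huv' : u' < v' := by linarith [hlen']
        have harg : (2:ℝ) ≤ 2^j * (v' - u') := by
          rw [hlen']
          rw [pow_succ] at h2
          nlinarith [hpow]
        obtain ⟨N, i'', p, hp, hsub⟩ := IH i' u' v' h0' huv' h5k' harg
        refine ⟨N+1, i'', p, hp, ?_⟩
        rw [Function.iterate_succ, Set.image_comp]
        rw [← himg'] at hsub
        exact hsub
      · push_neg at hvsmall
        have hm1lt : ((m+1:ℕ)) < 5*k := by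
          have : ((m:ℝ))+1 < 5*(k:ℝ) := by linarith
          have : ((m+1:ℕ):ℝ) < ((5*k:ℕ):ℝ) := by push_cast; linarith
          exact_mod_cast this
        by_cases hhalf : (v-u)/2 ≤ (m:ℝ)+1 - u
        · -- left half [u, m+1]
          obtain ⟨i', u', v', h0', h5k', hlen', himg'⟩ :=
            seg_step E hk hE0 hmeet ix hix i hmlt hm1 (le_of_lt hm2) le_rfl
          have huv' : u' < v' := by linarith [hlen']
          have hkey : 2^j * ((v-u)/2) ≤ 2^j * ((m:ℝ)+1-u) :=
            mul_le_mul_of_nonneg_left hhalf (le_of_lt hpow)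
          have harg : (2:ℝ) ≤ 2^j * (v' - u') := by
            rw [hlen']
            rw [pow_succ] at h2
            nlinarith [hkey]
          obtain ⟨N, i'', p, hp, hsub⟩ := IH i' u' v' h0' huv' h5k' harg
          refine ⟨N+1, i'', p, hp, ?_⟩
          rw [Function.iterate_succ, Set.image_comp]
          rw [← himg'] at hsub
          refine subset_trans hsub (Set.image_mono (Set.image_mono (Set.image_mono ?_)))
          exact Set.Icc_subset_Icc le_rfl (le_of_lt hvsmall)
        · -- right half [m+1, min v (m+2)]
          push_neg at hhalf
          have hBlen : (v-u)/2 ≤ min v ((m:ℝ)+2) - ((m:ℝ)+1) := by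
            rcases le_total v ((m:ℝ)+2) with h|h
            · rw [min_eq_left h]; linarith
            · rw [min_eq_right h]; linarith
          have hsub1 : ((m+1:ℕ):ℝ) = (m:ℝ)+1 := by push_cast; ring
          have hlb : ((m+1:ℕ):ℝ) ≤ (m:ℝ)+1 := by rw [hsub1]
          have hub : min v ((m:ℝ)+2) ≤ ((m+1:ℕ):ℝ)+1 := by
            rw [hsub1]
            exact le_trans (min_le_right _ _) (by linarith)
          have hmid : ((m:ℝ)+1 : ℝ) ≤ min v ((m:ℝ)+2) :=
            le_min (by linarith) (by linarith)
          obtain ⟨i', u', v', h0', h5k', hlen', himg'⟩ :=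
            seg_step (u := (m:ℝ)+1) (v := min v ((m:ℝ)+2)) E hk hE0 hmeet ix hix i hm1lt
              hlb hmid hub
          have huv' : u' < v' := by linarith [hlen', hBlen]
          have hkey : 2^j * ((v-u)/2) ≤ 2^j * (min v ((m:ℝ)+2) - ((m:ℝ)+1)) :=
            mul_le_mul_of_nonneg_left hBlen (le_of_lt hpow)
          have harg : (2:ℝ) ≤ 2^j * (v' - u') := by
            rw [hlen']
            rw [pow_succ] at h2
            nlinarith [hkey]
          obtain ⟨N, i'', p, hp, hsub⟩ := IH i' u' v' h0' huv' h5k' harg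
          refine ⟨N+1, i'', p, hp, ?_⟩
          rw [Function.iterate_succ, Set.image_comp]
          rw [← himg'] at hsub
          refine subset_trans hsub (Set.image_mono (Set.image_mono (Set.image_mono ?_)))
          exact Set.Icc_subset_Icc (by linarith) (min_le_left _ _)

end Star5

section Star6

variable {T : Type*} [MetricSpace T] {n : ℕ} [NeZero n] {B : Fin n → Set T}
  (E : ∀ i, (Set.Icc (0:ℝ) 1) ≃ₜ (B i)) {k : ℕ} {a : T} {e : Fin n → T}
  (hk : 2 ≤ k)
  (hE0 : ∀ i, ((E i) ⟨0, by norm_num⟩ : T) = a)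
  (hmeet : ∀ i j, i ≠ j → B i ∩ B j = {a})
  (ix : T → Fin n) (hix : ∀ x, x ∈ B (ix x))

/-- the `p`-th cell on beam `i`. -/
noncomputable def Cl (E : ∀ i, (Set.Icc (0:ℝ) 1) ≃ₜ (B i)) (k : ℕ) (i : Fin n) (p : ℕ) : Set T :=
  psi E k i '' Icc (5*(p:ℝ)) (5*(p:ℝ)+5)

include hk hE0 hmeet in
lemma cellA (i : Fin n) {p : ℕ} (hp : p+1 < k) :
    Cl E k i p ⊆ F E k ix hix '' Cl E k i (p+1) := by
  have hm : 5*p+5 < 5*k := by omega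
  have hWα : W k (5*p+5) = 5*(p:ℤ)+5 := by
    rw [show 5*p+5 = 5*(p+1) by ring, W_50 (by omega)]
    push_cast; ring
  have hWβ : W k (5*p+5+1) = 5*(p:ℤ) := by
    rw [show 5*p+5+1 = 5*(p+1)+1 by ring, W_51]
    push_cast; ring
  have him := sub_image_pos E hk hE0 hmeet ix hix i (5*p+5) hm _ _ hWα hWβ
    (by omega) (by omega)
  rw [min_comm, min_eq_left (by omega : 5*(p:ℤ) ≤ 5*(p:ℤ)+5),
    max_comm, max_eq_right (by omega : 5*(p:ℤ) ≤ 5*(p:ℤ)+5)] at him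
  have hcl : Cl E k i p = F E k ix hix '' (psi E k i '' Icc ((5*p+5:ℕ):ℝ) (((5*p+5:ℕ):ℝ)+1)) := by
    rw [him]
    unfold Cl
    congr 1
    push_cast
    ring_nf
  rw [hcl]
  refine Set.image_mono (Set.image_mono ?_)
  refine Set.Icc_subset_Icc ?_ ?_ <;> push_cast <;> linarith

include hk hE0 hmeet in
lemma cellB (i : Fin n) {p : ℕ} (hp : p < k) :
    Cl E k i p ⊆ F E k ix hix '' Cl E k i p := by
  have hm : 5*p+2 < 5*k := by omega
  have hWα : W k (5*p+2) = 5*(p:ℤ) := W_52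
  have hWβ : W k (5*p+2+1) = 5*(p:ℤ)+5 := by
    rw [show 5*p+2+1 = 5*p+3 by ring]; exact W_53
  have him := sub_image_pos E hk hE0 hmeet ix hix i (5*p+2) hm _ _ hWα hWβ
    (by omega) (by omega)
  rw [min_eq_left (by omega : 5*(p:ℤ) ≤ 5*(p:ℤ)+5),
    max_eq_right (by omega : 5*(p:ℤ) ≤ 5*(p:ℤ)+5)] at him
  have hcl : Cl E k i p = F E k ix hix '' (psi E k i '' Icc ((5*p+2:ℕ):ℝ) (((5*p+2:ℕ):ℝ)+1)) := by
    rw [him]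
    unfold Cl
    congr 1
    push_cast
    ring_nf
  nth_rewrite 1 [hcl]
  refine Set.image_mono (Set.image_mono ?_)
  refine Set.Icc_subset_Icc ?_ ?_ <;> push_cast <;> linarith

include hk hE0 hmeet in
lemma cellC (i : Fin n) {p : ℕ} (hp : p+1 < k) :
    Cl E k i (p+1) ⊆ F E k ix hix '' Cl E k i p := by
  have hm : 5*p+3 < 5*k := by omega
  have hWα : W k (5*p+3) = 5*(p:ℤ)+5 := W_53
  have hWβ : W k (5*p+3+1) = 5*(p:ℤ)+10 := by
    rw [show 5*p+3+1 = 5*p+4 by ring]; exact W_54 hp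
  have him := sub_image_pos E hk hE0 hmeet ix hix i (5*p+3) hm _ _ hWα hWβ
    (by omega) (by omega)
  rw [min_eq_left (by omega : 5*(p:ℤ)+5 ≤ 5*(p:ℤ)+10),
    max_eq_right (by omega : 5*(p:ℤ)+5 ≤ 5*(p:ℤ)+10)] at him
  have hcl : Cl E k i (p+1) = F E k ix hix '' (psi E k i '' Icc ((5*p+3:ℕ):ℝ) (((5*p+3:ℕ):ℝ)+1)) := by
    rw [him]
    unfold Cl
    congr 1
    push_cast
    ring_nf
  rw [hcl]
  refine Set.image_mono (Set.image_mono ?_)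
  refine Set.Icc_subset_Icc ?_ ?_ <;> push_cast <;> linarith

include hk hE0 hmeet in
lemma cellD (i : Fin n) :
    Cl E k (i+1) 0 ⊆ F E k ix hix '' Cl E k i 0 := by
  have him := sub_image_neg E hk hE0 hmeet ix hix i
  have hcl : Cl E k (i+1) 0 = F E k ix hix '' (psi E k i '' Icc (0:ℝ) 1) := by
    rw [him]
    unfold Cl
    norm_num
  rw [hcl]
  refine Set.image_mono (Set.image_mono ?_)
  refine Set.Icc_subset_Icc (by norm_num) ?_
  push_cast
  linarith

lemma chain {G : T → T} {A bN : ℕ} {S S' S'' : Set T}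
    (h1 : S' ⊆ G^[A] '' S) (h2 : S'' ⊆ G^[bN] '' S') : S'' ⊆ G^[bN + A] '' S := by
  rw [Function.iterate_add, Set.image_comp]
  exact subset_trans h2 (Set.image_mono h1)

include hk hE0 hmeet in
lemma cell_down (i : Fin n) : ∀ p, p < k → Cl E k i 0 ⊆ (F E k ix hix)^[p] '' Cl E k i p := by
  intro p
  induction p with
  | zero => intro _; rw [Function.iterate_zero, Set.image_id]
  | succ p IHp =>
    intro hp
    have h1 : Cl E k i p ⊆ (F E k ix hix)^[1] '' Cl E k i (p+1) := by
      rw [Function.iterate_one]; exact cellA E hk hE0 hmeet ix hix i hp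
    exact (show p + 1 = p + 1 by rfl) ▸ chain h1 (IHp (by omega))

include hk hE0 hmeet in
lemma cell_pad (i : Fin n) {p : ℕ} (hp : p < k) :
    ∀ r, Cl E k i p ⊆ (F E k ix hix)^[r] '' Cl E k i p := by
  intro r
  induction r with
  | zero => rw [Function.iterate_zero, Set.image_id]
  | succ r IHr =>
    have h1 : Cl E k i p ⊆ (F E k ix hix)^[1] '' Cl E k i p := by
      rw [Function.iterate_one]; exact cellB E hk hE0 hmeet ix hix i hp
    exact chain h1 IHr

include hk hE0 hmeet in
lemma cell_up (i : Fin n) : ∀ p, p < k → Cl E k i p ⊆ (F E k ix hix)^[p] '' Cl E k i 0 := by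
  intro p
  induction p with
  | zero => intro _; rw [Function.iterate_zero, Set.image_id]
  | succ p IHp =>
    intro hp
    have h2 : Cl E k i (p+1) ⊆ (F E k ix hix)^[1] '' Cl E k i p := by
      rw [Function.iterate_one]; exact cellC E hk hE0 hmeet ix hix i hp
    have := chain (IHp (by omega)) h2
    rwa [show 1 + p = p + 1 by omega] at this

open Fin.NatCast Fin.CommRing in
include hk hE0 hmeet in
lemma cell_around (i : Fin n) : ∀ s : ℕ, Cl E k (i + (s : Fin n)) 0 ⊆
    (F E k ix hix)^[s] '' Cl E k i 0 := by
  intro s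
  induction s with
  | zero => rw [Function.iterate_zero, Set.image_id]; simp
  | succ s IHs =>
    have h2 : Cl E k (i + (s:Fin n) + 1) 0 ⊆ (F E k ix hix)^[1] '' Cl E k (i + (s:Fin n)) 0 := by
      rw [Function.iterate_one]; exact cellD E hk hE0 hmeet ix hix _
    have := chain IHs h2
    rw [show 1 + s = s + 1 by omega] at this
    rwa [show ((s+1 : ℕ) : Fin n) = (s : Fin n) + 1 by push_cast; ring, ← add_assoc]

open Fin.NatCast Fin.CommRing in
include hk hE0 hmeet in
lemma allCell (i : Fin n) {p : ℕ} (hp : p < k) (i' : Fin n) {p' : ℕ} (hp' : p' < k) :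
    Cl E k i' p' ⊆ (F E k ix hix)^[(k-1) + (n + (k-1))] '' Cl E k i p := by
  have step1 : Cl E k i 0 ⊆ (F E k ix hix)^[k-1] '' Cl E k i p := by
    have := chain (cell_down E hk hE0 hmeet ix hix i p hp)
      (cell_pad E hk hE0 hmeet ix hix i (by omega : 0 < k) (k-1-p))
    rwa [show (k-1-p) + p = k-1 by omega] at this
  have step2 : Cl E k i' 0 ⊆ (F E k ix hix)^[n] '' Cl E k i 0 := by
    have hs : ((((i' - i : Fin n) : ℕ) : Fin n)) = i' - i := Fin.cast_val_eq_self _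
    have h1 := cell_around E hk hE0 hmeet ix hix i ((i' - i : Fin n) : ℕ)
    rw [hs, add_sub_cancel] at h1
    have h2 := cell_pad E hk hE0 hmeet ix hix i' (by omega : 0 < k)
      (n - ((i' - i : Fin n) : ℕ))
    have := chain h1 h2
    rwa [show (n - ((i' - i : Fin n) : ℕ)) + ((i' - i : Fin n) : ℕ) = n by
      have := (i' - i).isLt; omega] at this
  have step3 : Cl E k i' p' ⊆ (F E k ix hix)^[k-1] '' Cl E k i' 0 := by
    have := chain (cell_up E hk hE0 hmeet ix hix i' p' hp')
      (cell_pad E hk hE0 hmeet ix hix i' hp' (k-1-p'))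
    rwa [show (k-1-p') + p' = k-1 by omega] at this
  exact chain (chain step1 step2) step3

end Star6

section Star7

variable {T : Type*} [MetricSpace T] {n : ℕ} [NeZero n] {B : Fin n → Set T}
  (E : ∀ i, (Set.Icc (0:ℝ) 1) ≃ₜ (B i)) {k : ℕ} {a : T} {e : Fin n → T}
  (hk : 2 ≤ k)
  (hE0 : ∀ i, ((E i) ⟨0, by norm_num⟩ : T) = a)
  (hmeet : ∀ i j, i ≠ j → B i ∩ B j = {a})
  (ix : T → Fin n) (hix : ∀ x, x ∈ B (ix x))

lemma psi_repr (hk : 2 ≤ k) (i : Fin n) (x : T) (hx : x ∈ B i) :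
    psi E k i (5*(k:ℝ) * (((E i).symm ⟨x, hx⟩ : Set.Icc (0:ℝ) 1) : ℝ)) = x ∧
    0 ≤ 5*(k:ℝ) * (((E i).symm ⟨x, hx⟩ : Set.Icc (0:ℝ) 1) : ℝ) ∧
    5*(k:ℝ) * (((E i).symm ⟨x, hx⟩ : Set.Icc (0:ℝ) 1) : ℝ) ≤ 5*(k:ℝ) := by
  set s := (E i).symm ⟨x, hx⟩ with hs
  have hs0 : 0 ≤ (s:ℝ) := s.2.1
  have hs1 : (s:ℝ) ≤ 1 := s.2.2
  have h5k : (0:ℝ) < 5*(k:ℝ) := by positivity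
  refine ⟨?_, by positivity, by nlinarith⟩
  rw [psi_apply E hk i (by positivity) (by nlinarith)]
  have hdiv : 5*(k:ℝ) * (s:ℝ) / (5*(k:ℝ)) = (s:ℝ) := by field_simp
  have hx2 : ((E i) s : T) = x := by rw [hs, Homeomorph.apply_symm_apply]
  rw [← hx2]
  exact congrArg (fun z => ((E i) z : T)) (Subtype.ext hdiv)

include hk ix hix in
lemma cover (x : T) : ∃ (i : Fin n) (p : ℕ), p < k ∧ x ∈ Cl E k i p := by
  set i := ix x with hi
  obtain ⟨hrep, ht0, ht5⟩ := psi_repr E hk i x (hix x)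
  set t := 5*(k:ℝ) * (((E i).symm ⟨x, hix x⟩ : Set.Icc (0:ℝ) 1) : ℝ) with htdef
  set q : ℕ := ⌊t⌋.toNat with hq
  obtain ⟨hq1, hq2⟩ := floor_piece ht0
  have hqk : q ≤ 5*k := by
    have : ((q:ℕ):ℝ) ≤ ((5*k:ℕ):ℝ) := by push_cast; linarith
    exact_mod_cast this
  refine ⟨i, min (q/5) (k-1), by omega, ?_⟩
  refine ⟨t, ⟨?_, ?_⟩, hrep⟩
  · rcases le_or_gt (q/5) (k-1) with h|h
    · rw [min_eq_left h]
      have : (5*(q/5) : ℕ) ≤ q := by omega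
      have : ((5*(q/5) : ℕ):ℝ) ≤ (q:ℝ) := by exact_mod_cast this
      push_cast at this ⊢
      linarith
    · rw [min_eq_right (by omega)]
      have hq5k : q = 5*k := by omega
      have : ((q:ℕ):ℝ) = 5*(k:ℝ) := by rw [hq5k]; push_cast; ring
      push_cast [Nat.cast_sub (by omega : 1 ≤ k)]
      linarith
  · rcases le_or_gt (q/5) (k-1) with h|h
    · rw [min_eq_left h]
      have : q + 1 ≤ 5*(q/5) + 5 := by omega
      have : ((q:ℝ)) + 1 ≤ ((5*(q/5)+5 : ℕ):ℝ) := by exact_mod_cast this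
      push_cast at this ⊢
      linarith
    · rw [min_eq_right (by omega)]
      have hq5k : q = 5*k := by omega
      push_cast
      have : (t:ℝ) ≤ 5*(k:ℝ) := ht5
      have hk1 : (1:ℝ) ≤ (k:ℝ) := by exact_mod_cast (by omega : 1 ≤ k)
      push_cast [Nat.cast_sub (by omega : 1 ≤ k)]
      linarith

include hk hE0 hmeet in
lemma F_univ (r : ℕ) : (F E k ix hix)^[r] '' Set.univ = Set.univ := by
  induction r with
  | zero => simp
  | succ r IHr =>
    refine Set.eq_univ_of_univ_subset ?_
    intro y _
    obtain ⟨i, p, hp, hy⟩ := cover E hk ix hix y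
    have h1 : Cl E k i p ⊆ F E k ix hix '' Set.univ :=
      subset_trans (cellB E hk hE0 hmeet ix hix i hp)
        (Set.image_mono (Set.subset_univ _))
    have h2 : F E k ix hix '' Set.univ ⊆ (F E k ix hix)^[r+1] '' Set.univ := by
      rw [Function.iterate_succ', Set.image_comp, IHr]
    exact h2 (h1 hy)

end Star7

end Star12


open Star12

set_option maxHeartbeats 1000000

/-- On any n-star there is a mixing map, arbitrarily close to the
identity, fixing the center and all the endpoints of the beams. -/
theorem stmt12 {T : Type*} [MetricSpace T] [CompactSpace T] [ConnectedSpace T]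
    {n : ℕ} (hn : 1 ≤ n) {ε : ℝ} (hε : 0 < ε) (a : T) (B : Fin n → Set T)
    (e : Fin n → T) (harc : ∀ i, IsArcEnds (B i) a (e i))
    (hmeet : ∀ i j, i ≠ j → B i ∩ B j = {a})
    (hcover : (⋃ i, B i) = Set.univ) :
    ∃ f : T → T, Continuous f ∧ TopMixing f ∧ f a = a ∧ (∀ i, f (e i) = e i) ∧
      ∀ x : T, dist (f x) x < ε := by
  classical
  haveI : NeZero n := ⟨by omega⟩
  set E : ∀ i, (Set.Icc (0:ℝ) 1) ≃ₜ (B i) := fun i => (harc i).choose with hE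
  have hE0 : ∀ i, ((E i) ⟨0, by norm_num⟩ : T) = a := fun i => (harc i).choose_spec.1
  have hE1 : ∀ i, ((E i) ⟨1, by norm_num⟩ : T) = e i := fun i => (harc i).choose_spec.2
  haveI : CompactSpace (Set.Icc (0:ℝ) 1) := isCompact_iff_compactSpace.mp isCompact_Icc
  have hUC : ∀ i : Fin n, ∃ δ, 0 < δ ∧ ∀ s tt : Set.Icc (0:ℝ) 1, dist s tt < δ →
      dist ((E i) s : T) ((E i) tt : T) < ε/2 := by
    intro i
    have hc : Continuous (fun s : Set.Icc (0:ℝ) 1 => ((E i) s : T)) :=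
      continuous_subtype_val.comp (E i).continuous
    obtain ⟨δ, hδ0, hδ⟩ :=
      Metric.uniformContinuous_iff.mp (CompactSpace.uniformContinuous_of_continuous hc)
        (ε/2) (half_pos hε)
    exact ⟨δ, hδ0, fun s tt h => hδ h⟩
  choose δs hδpos hδs using hUC
  have hne : (Finset.univ : Finset (Fin n)).Nonempty := Finset.univ_nonempty
  set δ := Finset.univ.inf' hne δs with hδdef
  have hδ0 : 0 < δ := (Finset.lt_inf'_iff hne).mpr (fun i _ => hδpos i)
  obtain ⟨k, hk, hk2δ⟩ : ∃ k : ℕ, 2 ≤ k ∧ 2/(k:ℝ) < δ := by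
    obtain ⟨k0, hk0⟩ := exists_nat_gt (2/δ)
    refine ⟨max 2 k0, le_max_left _ _, ?_⟩
    have hkR' : (2:ℝ) ≤ ((max 2 k0 : ℕ):ℝ) := by exact_mod_cast le_max_left 2 k0
    have hkpos' : (0:ℝ) < ((max 2 k0 : ℕ):ℝ) := by linarith
    have hkk : (2:ℝ)/δ < ((max 2 k0 : ℕ):ℝ) :=
      lt_of_lt_of_le hk0 (by exact_mod_cast le_max_right 2 k0)
    rw [div_lt_iff₀ hkpos']
    rw [div_lt_iff₀ hδ0] at hkk
    nlinarith
  have hkR : (2:ℝ) ≤ (k:ℝ) := by exact_mod_cast hk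
  have hkpos : (0:ℝ) < k := by linarith
  have hexists : ∀ x : T, ∃ i, x ∈ B i := fun x => by
    have : x ∈ ⋃ i, B i := by rw [hcover]; trivial
    exact Set.mem_iUnion.mp this
  choose ix hix using hexists
  have h5kpos : (0:ℝ) < 5*k := by positivity
  -- the key distance estimate for points on a common beam
  have hpair : ∀ (i' : Fin n) (t1 t2 : ℝ), 0 ≤ t1 → t1 ≤ 5*k → 0 ≤ t2 → t2 ≤ 5*k →
      |t1 - t2| ≤ 10 → dist (psi E k i' t1) (psi E k i' t2) < ε/2 := by
    intro i' t1 t2 h1 h2 h3 h4 habs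
    rw [psi_apply E hk i' h1 h2, psi_apply E hk i' h3 h4]
    apply hδs i'
    rw [Subtype.dist_eq]
    simp only
    rw [Real.dist_eq]
    have heq : |t1/(5*(k:ℝ)) - t2/(5*(k:ℝ))| = |t1-t2|/(5*(k:ℝ)) := by
      rw [div_sub_div_same, abs_div, abs_of_pos h5kpos]
    calc |t1/(5*(k:ℝ)) - t2/(5*(k:ℝ))| = |t1-t2|/(5*(k:ℝ)) := heq
      _ ≤ 10/(5*(k:ℝ)) := by gcongr
      _ = 2/(k:ℝ) := by field_simp; ring
      _ < δ := hk2δ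
      _ ≤ δs i' := Finset.inf'_le _ (Finset.mem_univ i')
  refine ⟨F E k ix hix, F_continuous E hk hE0 hmeet ix hix hcover, ?_, ?_, ?_, ?_⟩
  · -- TopMixing
    intro U V hU hV hUne hVne
    obtain ⟨x, hxU⟩ := hUne
    obtain ⟨hrep, ht0, ht5⟩ := psi_repr E hk (ix x) x (hix x)
    set i : Fin n := ix x with hidef
    set t : ℝ := 5*(k:ℝ) * (((E i).symm ⟨x, hix x⟩ : Set.Icc (0:ℝ) 1) : ℝ) with htd
    have hO : IsOpen ((psi E k i) ⁻¹' U) := hU.preimage (psi_continuous E i)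
    have htO : t ∈ (psi E k i) ⁻¹' U := by
      rw [Set.mem_preimage]
      rw [show psi E k i t = x from hrep]
      exact hxU
    obtain ⟨r, hr0, hball⟩ := Metric.isOpen_iff.mp hO t htO
    set u := max 0 (t - r/2) with hudef
    set v := min (5*(k:ℝ)) (t + r/2) with hvdef
    have huv : u < v := max_lt (lt_min h5kpos (by linarith)) (lt_min (by linarith) (by linarith))
    have hu0 : 0 ≤ u := le_max_left _ _
    have hv5 : v ≤ 5*(k:ℝ) := min_le_left _ _
    have hseg : psi E k i '' Icc u v ⊆ U := by
      rintro y ⟨s, hs, rfl⟩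
      have hs1 : t - r/2 ≤ s := le_trans (le_max_right _ _) hs.1
      have hs2 : s ≤ t + r/2 := le_trans hs.2 (min_le_right _ _)
      have : s ∈ Metric.ball t r := by
        rw [Metric.mem_ball, Real.dist_eq, abs_lt]
        constructor <;> linarith
      exact hball this
    obtain ⟨jj, hjj⟩ := pow_unbounded_of_one_lt (2/(v-u)) one_lt_two
    have hjar : 2 ≤ (2:ℝ)^jj * (v - u) := by
      rw [div_lt_iff₀ (by linarith)] at hjj
      linarith
    obtain ⟨N1, i', p, hp, hcell⟩ := grow E hk hE0 hmeet ix hix jj i u v hu0 huv hv5 hjar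
    set N2 := (k-1) + (n + (k-1)) with hN2
    refine ⟨N1 + N2, fun mm hmm => ?_⟩
    have hcell' : Cl E k i' p ⊆ (F E k ix hix)^[N1] '' U :=
      subset_trans hcell (Set.image_mono hseg)
    have hkey : Set.univ ⊆ (F E k ix hix)^[N2 + N1] '' U := by
      intro y _
      obtain ⟨iy, py, hpy, hy⟩ := cover E hk ix hix y
      have h1 : Cl E k iy py ⊆ (F E k ix hix)^[N2] '' ((F E k ix hix)^[N1] '' U) :=
        subset_trans (allCell E hk hE0 hmeet ix hix i' hp iy hpy)
          (Set.image_mono hcell')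
      rw [← Set.image_comp, ← Function.iterate_add] at h1
      exact h1 hy
    have hU_univ : (F E k ix hix)^[mm] '' U = Set.univ := by
      apply Set.eq_univ_of_univ_subset
      have hmm' : N2 + N1 ≤ mm := by
        calc N2 + N1 = N1 + N2 := Nat.add_comm _ _
          _ ≤ mm := hmm
      have hsplit : (F E k ix hix)^[mm] =
          (F E k ix hix)^[mm - (N2+N1)] ∘ (F E k ix hix)^[N2+N1] := by
        rw [← Function.iterate_add, Nat.sub_add_cancel hmm']
      rw [hsplit, Set.image_comp]
      calc Set.univ = (F E k ix hix)^[mm - (N2+N1)] '' Set.univ :=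
            (F_univ E hk hE0 hmeet ix hix _).symm
        _ ⊆ _ := Set.image_mono hkey
    obtain ⟨y, hyV⟩ := hVne
    exact ⟨y, by rw [hU_univ]; trivial, hyV⟩
  · -- fixes the center
    have h0 : psi E k (ix a) 0 = a := psi_zero E hk hE0 (ix a)
    calc F E k ix hix a = F E k ix hix (psi E k (ix a) 0) := by rw [h0]
      _ = phi E k (ix a) (hmap k 0) :=
          F_eq E hk hE0 hmeet ix hix _ le_rfl (by positivity)
      _ = a := by rw [hmap_zero hk, phi_zero E hk hE0]
  · -- fixes endpoints
    intro i
    have h1 : psi E k i (5*(k:ℝ)) = e i := psi_last E hk hE1 i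
    calc F E k ix hix (e i) = F E k ix hix (psi E k i (5*(k:ℝ))) := by rw [h1]
      _ = phi E k i (hmap k (5*(k:ℝ))) :=
          F_eq E hk hE0 hmeet ix hix i (by positivity) le_rfl
      _ = psi E k i (5*(k:ℝ)) := by
          rw [hmap_last hk, phi_of_nonneg E i (by positivity)]
      _ = e i := h1
  · -- distance estimate
    intro x
    obtain ⟨hrep, ht0, ht5⟩ := psi_repr E hk (ix x) x (hix x)
    set i : Fin n := ix x with hidef
    set t : ℝ := 5*(k:ℝ) * (((E i).symm ⟨x, hix x⟩ : Set.Icc (0:ℝ) 1) : ℝ) with htd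
    have hFx : F E k ix hix x = phi E k i (hmap k t) := by
      conv_lhs => rw [← hrep]
      exact F_eq E hk hE0 hmeet ix hix i ht0 ht5
    rcases eq_or_lt_of_le ht5 with h5 | h5
    · rw [hFx, h5, hmap_last hk, phi_of_nonneg E i (by positivity), ← h5, hrep]
      simpa using hε
    · set m : ℕ := ⌊t⌋.toNat with hmdef
      obtain ⟨hm1, hm2⟩ := floor_piece ht0
      have hmlt : m < 5*k := by
        have : ((m:ℕ):ℝ) < ((5*k:ℕ):ℝ) := by push_cast; linarith
        exact_mod_cast this
      have hWp := W_pair hk m hmlt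
      have hbet := hmap_between hk hmlt hm1 (le_of_lt hm2)
      have hA1 : (m:ℝ) - 6 ≤ ((W k m : ℤ):ℝ) := by
        have := hWp.2.2.2.1
        have : ((m:ℝ)) - 6 ≤ ((W k m : ℤ):ℝ) := by exact_mod_cast (by omega : (m:ℤ) - 6 ≤ W k m)
        exact this
      have hA2 : ((W k m : ℤ):ℝ) ≤ (m:ℝ) + 6 := by
        exact_mod_cast (by omega : W k m ≤ (m:ℤ) + 6)
      have hB1 : (m:ℝ) - 5 ≤ ((W k (m+1) : ℤ):ℝ) := by
        exact_mod_cast (by omega : (m:ℤ) - 5 ≤ W k (m+1))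
      have hB2 : ((W k (m+1) : ℤ):ℝ) ≤ (m:ℝ) + 7 := by
        exact_mod_cast (by omega : W k (m+1) ≤ (m:ℤ) + 7)
      have hmin : (m:ℝ) - 6 ≤ min ((W k m : ℤ):ℝ) ((W k (m+1) : ℤ):ℝ) :=
        le_min hA1 (by linarith)
      have hmax : max ((W k m : ℤ):ℝ) ((W k (m+1) : ℤ):ℝ) ≤ (m:ℝ) + 7 :=
        max_le (by linarith) hB2
      have habs : |hmap k t - t| ≤ 10 := by
        rw [abs_le]
        constructor <;> nlinarith [hbet.1, hbet.2, hm1, hm2]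
      have hWlow : (-5:ℝ) ≤ min ((W k m : ℤ):ℝ) ((W k (m+1) : ℤ):ℝ) := by
        refine le_min ?_ ?_ <;> exact_mod_cast (by omega : (-5:ℤ) ≤ _)
      have hW5k : max ((W k m : ℤ):ℝ) ((W k (m+1) : ℤ):ℝ) ≤ 5*(k:ℝ) := by
        refine max_le ?_ ?_
        · exact_mod_cast hWp.2.2.1.2.1
        · exact_mod_cast hWp.2.2.1.2.2.2
      rcases le_or_gt 0 (hmap k t) with hpos | hneg
      · rw [hFx, phi_of_nonneg E i hpos]
        have : dist (psi E k i (hmap k t)) (psi E k i t) < ε/2 := by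
          apply hpair i _ _ hpos (le_trans hbet.2 hW5k) ht0 ht5 habs
        calc dist (psi E k i (hmap k t)) x = dist (psi E k i (hmap k t)) (psi E k i t) := by
              rw [hrep]
          _ < ε/2 := this
          _ < ε := by linarith
      · -- negative side: near the center
        have hneg5 : (-5:ℝ) ≤ hmap k t := le_trans hWlow hbet.1
        have hsgn : W k m ≤ 0 ∧ W k (m+1) ≤ 0 ∧ m ≤ 1 := by
          rcases hWp.2.1 with ⟨h1, h2⟩ | ⟨h1, h2, h3, h4, h5'⟩
          · exfalso
            have : (0:ℝ) ≤ min ((W k m : ℤ):ℝ) ((W k (m+1) : ℤ):ℝ) := by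
              refine le_min ?_ ?_ <;> exact_mod_cast (by omega : (0:ℤ) ≤ _)
            linarith [le_trans this hbet.1]
          · exact ⟨h2, h4, h5'⟩
        have ht2 : t ≤ 2 := by
          have : ((m:ℕ):ℝ) ≤ 1 := by exact_mod_cast hsgn.2.2
          linarith
        rw [hFx, phi_of_nonpos E hk hE0 i (le_of_lt hneg)]
        have hd1 : dist (psi E k (i+1) (-hmap k t)) a < ε/2 := by
          have := hpair (i+1) (-hmap k t) 0 (by linarith) (by linarith) le_rfl
            (by positivity) (by rw [sub_zero, abs_of_nonneg (by linarith)]; linarith)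
          rwa [psi_zero E hk hE0 (i+1)] at this
        have hd2 : dist a x < ε/2 := by
          have := hpair i 0 t le_rfl (by positivity) ht0 ht5
            (by rw [zero_sub, abs_neg, abs_of_nonneg ht0]; linarith)
          rwa [psi_zero E hk hE0 i, hrep] at this
        calc dist (psi E k (i+1) (-hmap k t)) x ≤
              dist (psi E k (i+1) (-hmap k t)) a + dist a x := dist_triangle _ _ _
          _ < ε/2 + ε/2 := by exact add_lt_add hd1 hd2
          _ = ε := by ring
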